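/- Let g be a Lie algebra over a field F, λ, μ : g → g linear maps and s ∈ g satisfying, for all a, b ∈ g: (1) ⁅λ(a),b⁆ − ⁅a,μ(b)⁆ = λ(⁅a,b⁆); (2) ⁅μ(a),b⁆ − ⁅μ(b),a⁆ = μ(⁅a,b⁆); (3) ⁅s,a⁆ + μ(a) = μ(μ(a)) + λ(μ(a)). Then: (i) μ is a derivation of g, i.e. μ(⁅a,b⁆) = ⁅μ(a),b⁆ + ⁅a,μ(b)⁆ for all a, b; and (ii) κ := λ + μ lies in the centroid of g, i.e. κ(⁅a,b⁆) = ⁅κ(a),b⁆ for all a, b. -/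
import Mathlib

/-- For a Lie algebra `g` over a field `F` and data `(lam, mu, s)` satisfying the
homogeneous Leibniz affgebra conditions (1)–(3), the map `mu` is a derivation of `g`
and `κ := lam + mu` lies in the centroid of `g`. -/
theorem homogeneous_lie_fibre_mu_derivation_kappa_centroid
    {F g : Type*} [Field F] [LieRing g] [LieAlgebra F g]
    (lam mu : g →ₗ[F] g) (s : g)
    (h1 : ∀ a b : g, ⁅lam a, b⁆ - ⁅a, mu b⁆ = lam ⁅a, b⁆)
    (h2 : ∀ a b : g, ⁅mu a, b⁆ - ⁅mu b, a⁆ = mu ⁅a, b⁆)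
    (h3 : ∀ a : g, ⁅s, a⁆ + mu a = mu (mu a) + lam (mu a)) :
    (∀ a b : g, mu ⁅a, b⁆ = ⁅mu a, b⁆ + ⁅a, mu b⁆) ∧
    (∀ a b : g, (lam + mu) ⁅a, b⁆ = ⁅(lam + mu) a, b⁆) := by
  have hder : ∀ a b : g, mu ⁅a, b⁆ = ⁅mu a, b⁆ + ⁅a, mu b⁆ := by
    intro a b
    have := h2 a b
    rw [← lie_skew (mu b) a] at this
    rw [sub_neg_eq_add] at this
    exact this.symm
  refine ⟨hder, ?_⟩
  intro a b
  simp only [LinearMap.add_apply]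
  rw [hder, ← h1 a b, add_lie]
  abel
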